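/- arXiv:1604.01971 — 5 statements merged into one kernel-verified Lean document; each statement's English description precedes it below -/
import Mathlib

section
/- Fix a finite ground set M with m elements, an integer k with 1 ≤ k ≤ m, a real t > 0, and a family 𝒮 of subsets of M each of size exactly k. Define v(S) = |S|·t if |S| < k; v(S) = k·t if there exists T ∈ 𝒮 with T ⊆ S; and v(S) = (k - 1/2^{|S|})·t otherwise. Then v is monotone non-decreasing and submodular, i.e., for all S, T ⊆ M: v(S) + v(T) ≥ v(S∪T) + v(S∩T). -/
/-- The valuation used in the menu-verification reduction for submodular valuations
is monotone non-decreasing and submodular. -/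
theorem stmt1 {M : Type*} [Fintype M] [DecidableEq M]
    (k : ℕ) (hk1 : 1 ≤ k) (hk2 : k ≤ Fintype.card M)
    (t : ℝ) (ht : 0 < t)
    (𝒮 : Finset (Finset M)) (h𝒮 : ∀ T ∈ 𝒮, T.card = k)
    (v : Finset M → ℝ)
    (hv1 : ∀ S : Finset M, S.card < k → v S = S.card * t)
    (hv2 : ∀ S : Finset M, (∃ T ∈ 𝒮, T ⊆ S) → v S = k * t)
    (hv3 : ∀ S : Finset M, ¬ S.card < k → ¬ (∃ T ∈ 𝒮, T ⊆ S) →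
      v S = (k - 1 / 2 ^ S.card) * t) :
    (∀ S T : Finset M, S ⊆ T → v S ≤ v T) ∧
    (∀ S T : Finset M, v (S ∪ T) + v (S ∩ T) ≤ v S + v T) := by
  classical
  set h : ℕ → ℝ := fun n => if n < k then (n : ℝ) * t else ((k : ℝ) - 1 / 2 ^ n) * t with hh
  have hpow : ∀ n : ℕ, (0 : ℝ) < 1 / 2 ^ n := fun n => by positivity
  have hpowle : ∀ m n : ℕ, m ≤ n → (1 : ℝ) / 2 ^ n ≤ 1 / 2 ^ m := by
    intro m n hmn
    apply one_div_le_one_div_of_le (by positivity)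
    exact pow_le_pow_right₀ (by norm_num) hmn
  have hpk : ∀ n : ℕ, k ≤ n → (1 : ℝ) / 2 ^ n ≤ 1 / 2 := by
    intro n hn
    calc (1 : ℝ) / 2 ^ n ≤ 1 / 2 ^ 1 := hpowle 1 n (le_trans hk1 hn)
    _ = 1 / 2 := by norm_num
  have hgoodcard : ∀ S : Finset M, (∃ T ∈ 𝒮, T ⊆ S) → k ≤ S.card := by
    rintro S ⟨T, hT, hTS⟩
    rw [← h𝒮 T hT]; exact Finset.card_le_card hTS
  have hval : ∀ S : Finset M, ¬(∃ T ∈ 𝒮, T ⊆ S) → v S = h S.card := by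
    intro S hg
    by_cases hc : S.card < k
    · rw [hv1 S hc, hh]; simp [hc]
    · rw [hv3 S hc hg, hh]; simp [hc]
  -- h is monotone
  have hmono : ∀ a b : ℕ, a ≤ b → h a ≤ h b := by
    intro a b hab
    rw [hh]; dsimp only
    split_ifs with h1 h2 h2
    · have : (a : ℝ) ≤ (b : ℝ) := by exact_mod_cast hab
      nlinarith
    · have : (a : ℝ) + 1 ≤ (k : ℝ) := by exact_mod_cast h1
      have := hpk b (by omega)
      nlinarith
    · omega
    · have := hpowle a b hab
      nlinarith
  have hble : ∀ n : ℕ, h n ≤ k * t := by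
    intro n
    rw [hh]; dsimp only
    split_ifs with h1
    · have : (n : ℝ) ≤ (k : ℝ) := by exact_mod_cast h1.le
      nlinarith
    · have := hpow n
      nlinarith
  have hvle : ∀ S : Finset M, v S ≤ k * t := by
    intro S
    by_cases hg : ∃ T ∈ 𝒮, T ⊆ S
    · rw [hv2 S hg]
    · rw [hval S hg]; exact hble _
  -- monotonicity
  have mono : ∀ S T : Finset M, S ⊆ T → v S ≤ v T := by
    intro S T hST
    by_cases hg : ∃ T0 ∈ 𝒮, T0 ⊆ T
    · rw [hv2 T hg]; exact hvle S
    · have hgS : ¬ ∃ T0 ∈ 𝒮, T0 ⊆ S := by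
        rintro ⟨T0, hT0, hT0S⟩; exact hg ⟨T0, hT0, hT0S.trans hST⟩
      rw [hval S hgS, hval T hg]
      exact hmono _ _ (Finset.card_le_card hST)
  -- decreasing marginals of h
  have hstep : ∀ n : ℕ, h (n + 2) - h (n + 1) ≤ h (n + 1) - h n := by
    intro n
    rw [hh]; dsimp only
    split_ifs with h1 h2 h3 h2 h3 h3 h3
    · push_cast; ring_nf; nlinarith
    · omega
    · omega
    · omega
    · -- n+2 = k : h(n+2) = k - 2^{-(n+2)}, others linear
      have hk' : k = n + 2 := by omega
      have := hpow (n + 2)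
      push_cast [hk']
      nlinarith
    · omega
    · -- n+1 = k case: need 2^{-(n+2)} + 2^{-(n+1)} ≤ 1
      have hk' : k = n + 1 := by omega
      have h1' := hpk (n + 1) (by omega)
      have h2' := hpowle (n + 1) (n + 2) (by omega)
      have h3' : (1 : ℝ) / 2 ^ (n + 2) + 1 / 2 ^ (n + 2) = 1 / 2 ^ (n + 1) := by
        rw [← add_div, pow_succ]; ring
      push_cast [hk']
      nlinarith
    · -- n ≥ k
      have e1 : (1 : ℝ) / 2 ^ (n + 2) + 1 / 2 ^ (n + 2) = 1 / 2 ^ (n + 1) := by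
        rw [← add_div, pow_succ]; ring
      have e2 : (1 : ℝ) / 2 ^ (n + 1) + 1 / 2 ^ (n + 1) = 1 / 2 ^ n := by
        rw [← add_div, pow_succ]; ring
      have := hpow (n + 2)
      nlinarith
  have hδ : Antitone (fun n => h (n + 1) - h n) := by
    apply antitone_nat_of_succ_le
    intro n
    exact hstep n
  have hshift : ∀ b s : ℕ, b ≤ s → ∀ d : ℕ, h (s + d) + h b ≤ h (b + d) + h s := by
    intro b s hbs d
    induction d with
    | zero => simp [add_comm]
    | succ d ih =>
      have hd : h (s + d + 1) - h (s + d) ≤ h (b + d + 1) - h (b + d) :=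
        hδ (by omega : b + d ≤ s + d)
      have : s + (d + 1) = s + d + 1 := by omega
      rw [this]
      have : b + (d + 1) = b + d + 1 := by omega
      rw [this]
      linarith
  -- the hard case inequality
  have hhard : ∀ b s τ : ℕ, b + 1 ≤ s → b + 1 ≤ τ → k + b ≤ s + τ →
      k * t + h b ≤ h s + h τ := by
    intro b s τ hbs hbτ hsum
    rw [hh]; dsimp only
    split_ifs with h1 h2 h3 h2 h3 h3 h3
    · -- all small
      have : (k : ℝ) + (b : ℝ) ≤ (s : ℝ) + (τ : ℝ) := by exact_mod_cast hsum
      nlinarith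
    · -- b,s small, τ ≥ k
      have hbs' : (b : ℝ) + 1 ≤ (s : ℝ) := by exact_mod_cast hbs
      have := hpk τ (by omega)
      nlinarith
    · -- b,τ small, s ≥ k
      have hbτ' : (b : ℝ) + 1 ≤ (τ : ℝ) := by exact_mod_cast hbτ
      have := hpk s (by omega)
      nlinarith
    · -- b small, s,τ ≥ k
      have hb' : (b : ℝ) + 1 ≤ (k : ℝ) := by exact_mod_cast h1
      have := hpk s (by omega)
      have := hpk τ (by omega)
      nlinarith
    · omega
    · omega
    · omega
    · -- b ≥ k, then s,τ ≥ b+1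
      have e1 := hpowle (b + 1) s hbs
      have e2 := hpowle (b + 1) τ hbτ
      have e3 : (1 : ℝ) / 2 ^ (b + 1) + 1 / 2 ^ (b + 1) = 1 / 2 ^ b := by
        rw [← add_div, pow_succ]; ring
      nlinarith
  refine ⟨mono, ?_⟩
  intro S T
  have hcard : (S ∪ T).card + (S ∩ T).card = S.card + T.card :=
    Finset.card_union_add_card_inter S T
  by_cases hgA : ∃ T0 ∈ 𝒮, T0 ⊆ S ∪ T
  · by_cases hgS : ∃ T0 ∈ 𝒮, T0 ⊆ S
    · rw [hv2 _ hgA, hv2 _ hgS]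
      have : v (S ∩ T) ≤ v T := mono _ _ Finset.inter_subset_right
      linarith
    · by_cases hgT : ∃ T0 ∈ 𝒮, T0 ⊆ T
      · rw [hv2 _ hgA, hv2 _ hgT]
        have : v (S ∩ T) ≤ v S := mono _ _ Finset.inter_subset_left
        linarith
      · -- hard case
        have hgB : ¬ ∃ T0 ∈ 𝒮, T0 ⊆ S ∩ T := by
          rintro ⟨T0, hT0, hsub⟩
          exact hgS ⟨T0, hT0, hsub.trans Finset.inter_subset_left⟩
        have hnST : ¬ S ⊆ T := by
          intro hsub
          exact hgT (by rwa [Finset.union_eq_right.mpr hsub] at hgA)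
        have hnTS : ¬ T ⊆ S := by
          intro hsub
          exact hgS (by rwa [Finset.union_eq_left.mpr hsub] at hgA)
        have hBS : (S ∩ T).card < S.card := by
          apply Finset.card_lt_card
          refine ⟨Finset.inter_subset_left, ?_⟩
          intro hsub
          exact hnST (fun x hx => Finset.mem_of_mem_inter_right (hsub hx))
        have hBT : (S ∩ T).card < T.card := by
          apply Finset.card_lt_card
          refine ⟨Finset.inter_subset_right, ?_⟩
          intro hsub
          exact hnTS (fun x hx => Finset.mem_of_mem_inter_left (hsub hx))
        have hkA : k ≤ (S ∪ T).card := hgoodcard _ hgA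
        rw [hv2 _ hgA, hval _ hgS, hval _ hgT, hval _ hgB]
        exact hhard _ _ _ (by omega) (by omega) (by omega)
  · -- nothing good: pure cardinality argument
    have hgS : ¬ ∃ T0 ∈ 𝒮, T0 ⊆ S := by
      rintro ⟨T0, hT0, hsub⟩
      exact hgA ⟨T0, hT0, hsub.trans Finset.subset_union_left⟩
    have hgT : ¬ ∃ T0 ∈ 𝒮, T0 ⊆ T := by
      rintro ⟨T0, hT0, hsub⟩
      exact hgA ⟨T0, hT0, hsub.trans Finset.subset_union_right⟩
    have hgB : ¬ ∃ T0 ∈ 𝒮, T0 ⊆ S ∩ T := by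
      rintro ⟨T0, hT0, hsub⟩
      exact hgS ⟨T0, hT0, hsub.trans Finset.inter_subset_left⟩
    rw [hval _ hgA, hval _ hgS, hval _ hgT, hval _ hgB]
    have hsA : S.card ≤ (S ∪ T).card := Finset.card_le_card Finset.subset_union_left
    have hbS : (S ∩ T).card ≤ S.card := Finset.card_le_card Finset.inter_subset_left
    set b := (S ∩ T).card
    set s := S.card
    set a := (S ∪ T).card
    set τ := T.card
    have hd : a = s + (a - s) := by omega
    have hτ : τ = b + (a - s) := by omega
    calc h a + h b = h (s + (a - s)) + h b := by rw [← hd]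
      _ ≤ h (b + (a - s)) + h s := hshift b s hbS (a - s)
      _ = h s + h τ := by rw [← hτ]; ring
end

section
/- Let f_z(l) denote the deterministic communication complexity of the z-disjointness problem with n players on l-bit strings (each player i's input A^i is restricted to a known set S^i ⊆ {0,1}^l, and every input profile in S^1 × … × S^n has at most z intersecting bits, where a bit k intersects if A^i_k = 1 for all i). Then for every z ≥ 2, f_z(l) ≤ f_1(l^z) + f_{z-1}(l), and consequently f_z(l) ≤ z · f_1(l^z). -/
/-- A deterministic number-in-hand blackboard protocol for `n` players holding
`l`-bit strings: in each round a speaker (determined by the transcript so far)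
appends one bit, which may depend on his own input and the transcript. -/
structure CommProtocol (n l : ℕ) where
  rounds : ℕ
  speaker : List Bool → Fin n
  message : Fin n → (Fin l → Bool) → List Bool → Bool
  output : List Bool → Bool

namespace CommProtocol

def transcript {n l : ℕ} (P : CommProtocol n l) (A : Fin n → Fin l → Bool) : ℕ → List Bool
  | 0 => []
  | t + 1 =>
      let T := transcript P A t
      T ++ [P.message (P.speaker T) (A (P.speaker T)) T]

def run {n l : ℕ} (P : CommProtocol n l) (A : Fin n → Fin l → Bool) : Bool :=
  P.output (P.transcript A P.rounds)

end CommProtocol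

/-- Bit `k` intersects if all players hold a `1` there; an input intersects if some
bit intersects. -/
def intersects {n l : ℕ} (A : Fin n → Fin l → Bool) : Prop :=
  ∃ k : Fin l, ∀ i : Fin n, A i k = true

/-- A protocol correctly decides disjointness on all inputs from the restriction sets. -/
def CorrectOn {n l : ℕ} (P : CommProtocol n l) (S : Fin n → Set (Fin l → Bool)) : Prop :=
  ∀ A : Fin n → Fin l → Bool, (∀ i, A i ∈ S i) → (P.run A = true ↔ intersects A)

/-- The `z`-disjointness promise: every joint input has at most `z` intersecting bits. -/
def Promise (n l z : ℕ) (S : Fin n → Set (Fin l → Bool)) : Prop :=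
  ∀ A : Fin n → Fin l → Bool, (∀ i, A i ∈ S i) →
    (Finset.univ.filter (fun k : Fin l => ∀ i, A i k = true)).card ≤ z

/-- `disjCC n l z` : the deterministic communication complexity of `z`-disjointness,
i.e. the least `c` such that every family of restriction sets satisfying the
`z`-promise admits a correct protocol of cost at most `c`. -/
noncomputable def disjCC (n l z : ℕ) : ℕ :=
  sInf {c : ℕ | ∀ S : Fin n → Set (Fin l → Bool), Promise n l z S →
    ∃ P : CommProtocol n l, P.rounds ≤ c ∧ CorrectOn P S}

namespace CommProtocol
variable {n l : ℕ} (P : CommProtocol n l) (A : Fin n → Fin l → Bool)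

theorem transcript_succ (t : ℕ) :
    P.transcript A (t + 1) = P.transcript A t ++
      [P.message (P.speaker (P.transcript A t)) (A (P.speaker (P.transcript A t)))
        (P.transcript A t)] := rfl

theorem transcript_length (t : ℕ) : (P.transcript A t).length = t := by
  induction t with
  | zero => rfl
  | succ t ih => simp [transcript_succ, ih]

theorem transcript_take {s t : ℕ} (h : s ≤ t) :
    (P.transcript A t).take s = P.transcript A s := by
  induction t with
  | zero => interval_cases s; simp [transcript]
  | succ t ih =>
    rcases Nat.lt_or_ge s (t+1) with h' | h'
    · have hs : s ≤ t := Nat.lt_succ_iff.mp h'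
      rw [transcript_succ]
      rw [List.take_append_of_le_length (by rw [transcript_length]; exact hs)]
      exact ih hs
    · have : s = t + 1 := le_antisymm h h'
      subst this
      exact List.take_of_length_le (by rw [transcript_length])

theorem transcript_getElem {t r : ℕ} (h : t < r) (hlen : t < (P.transcript A r).length) :
    (P.transcript A r)[t] =
      P.message (P.speaker (P.transcript A t)) (A (P.speaker (P.transcript A t)))
        (P.transcript A t) := by
  have h2 : (P.transcript A r).take (t+1) = P.transcript A (t+1) := P.transcript_take A h
  have h3 : t < ((P.transcript A r).take (t+1)).length := by
    rw [h2, transcript_length]; omega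
  have h1 : (P.transcript A r)[t] = ((P.transcript A r).take (t+1))[t]'h3 :=
    List.getElem_take.symm
  rw [h1, List.getElem_of_eq h2]
  simp only [transcript_succ]
  exact List.getElem_concat_length (P.transcript_length A t).symm _

/-- Player `i`'s view-consistency with a transcript `T`. -/
def Consistent (i : Fin n) (a : Fin l → Bool) (T : List Bool) : Prop :=
  ∀ t (ht : t < T.length), P.speaker (T.take t) = i →
    T[t] = P.message i a (T.take t)

theorem consistent_transcript (r : ℕ) (i : Fin n) :
    P.Consistent i (A i) (P.transcript A r) := by
  intro t ht hspk
  have htr : t < r := by simpa [P.transcript_length A r] using ht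
  rw [P.transcript_take A htr.le] at hspk ⊢
  rw [P.transcript_getElem A htr ht, hspk]

theorem transcript_eq_of_consistent {r : ℕ} {T : List Bool} (hlen : T.length = r)
    (hc : ∀ i, P.Consistent i (A i) T) : P.transcript A r = T := by
  induction r generalizing T with
  | zero => simp [transcript]; exact List.eq_nil_of_length_eq_zero hlen
  | succ r ih =>
    have hT' : P.transcript A r = T.take r := by
      apply ih
      · simp [hlen]
      · intro i t ht hspk
        have htr : t < r := by simp [List.length_take, hlen] at ht; omega
        rw [List.take_take, Nat.min_eq_left htr.le] at hspk ⊢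
        have hth : t < T.length := by omega
        have := hc i t hth hspk
        rw [← this]
        rw [List.getElem_take]
    rw [transcript_succ, hT']
    have hr : r < T.length := by omega
    have hcons := hc (P.speaker (T.take r)) r hr rfl
    rw [← hcons]
    have := List.take_concat_get hr
    rw [List.concat_eq_append] at this
    rw [this]
    exact List.take_of_length_le (by omega)

end CommProtocol

open Classical in
/-- The `z`-product of a string: bit indexed by (the code of) a tuple
`f : Fin z → Fin l` is `1` iff `f` is strictly monotone (so it codes a
`z`-element subset) and all positions `f m` carry a `1`. -/
noncomputable def zprod (z : ℕ) {l : ℕ} (a : Fin l → Bool) (k : Fin (l ^ z)) : Bool :=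
  decide (StrictMono (finFunctionFinEquiv.symm k) ∧
    ∀ m : Fin z, a (finFunctionFinEquiv.symm k m) = true)

/-- The set of intersecting bits. -/
def Iset {n l : ℕ} (A : Fin n → Fin l → Bool) : Finset (Fin l) :=
  Finset.univ.filter (fun k => ∀ i, A i k = true)

theorem intersects_iff_Iset {n l : ℕ} (A : Fin n → Fin l → Bool) :
    intersects A ↔ (Iset A).Nonempty := by
  simp [intersects, Iset, Finset.Nonempty, Finset.mem_filter]

theorem zprod_all_iff {n l z : ℕ} (hn : 0 < n) (A : Fin n → Fin l → Bool) (k : Fin (l ^ z)) :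
    (∀ i, zprod z (A i) k = true) ↔
      (StrictMono (finFunctionFinEquiv.symm k) ∧
        ∀ m : Fin z, finFunctionFinEquiv.symm k m ∈ Iset A) := by
  constructor
  · intro h
    have h0 := h ⟨0, hn⟩
    simp only [zprod, decide_eq_true_eq] at h0
    refine ⟨h0.1, fun m => ?_⟩
    simp only [Iset, Finset.mem_filter, Finset.mem_univ, true_and]
    intro i
    have hi := h i
    simp only [zprod, decide_eq_true_eq] at hi
    exact hi.2 m
  · rintro ⟨hm, hmem⟩ i
    simp only [zprod, decide_eq_true_eq]
    refine ⟨hm, fun m => ?_⟩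
    have := hmem m
    simp only [Iset, Finset.mem_filter, Finset.mem_univ, true_and] at this
    exact this i

theorem z_le_of_tuple {n l z : ℕ} (hn : 0 < n) (A : Fin n → Fin l → Bool) (k : Fin (l ^ z))
    (h : ∀ i, zprod z (A i) k = true) : z ≤ (Iset A).card := by
  obtain ⟨hm, hmem⟩ := (zprod_all_iff hn A k).mp h
  have hsub : Finset.univ.image (finFunctionFinEquiv.symm k) ⊆ Iset A := by
    intro x hx
    simp only [Finset.mem_image] at hx
    obtain ⟨m, _, rfl⟩ := hx
    exact hmem m
  calc z = (Finset.univ.image (finFunctionFinEquiv.symm k)).card := by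
            rw [Finset.card_image_of_injective _ hm.injective]; simp
    _ ≤ (Iset A).card := Finset.card_le_card hsub

theorem zisect_iff {n l z : ℕ} (hn : 0 < n) (A : Fin n → Fin l → Bool)
    (hle : (Iset A).card ≤ z) :
    intersects (fun i => zprod z (A i)) ↔ (Iset A).card = z := by
  constructor
  · rintro ⟨k, hk⟩
    exact le_antisymm hle (z_le_of_tuple hn A k hk)
  · intro h
    refine ⟨finFunctionFinEquiv ((Iset A).orderEmbOfFin h : Fin z ↪o Fin l), ?_⟩
    show ∀ i, zprod z (A i) _ = true
    rw [zprod_all_iff hn A _, Equiv.symm_apply_apply]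
    exact ⟨((Iset A).orderEmbOfFin h).strictMono, fun m => (Iset A).orderEmbOfFin_mem h m⟩

theorem zcard_le_one {n l z : ℕ} (hn : 0 < n) (A : Fin n → Fin l → Bool)
    (hle : (Iset A).card ≤ z) :
    (Finset.univ.filter (fun k : Fin (l ^ z) => ∀ i, zprod z (A i) k = true)).card ≤ 1 := by
  apply Finset.card_le_one.mpr
  intro k hk k' hk'
  simp only [Finset.mem_filter, Finset.mem_univ, true_and] at hk hk'
  have hcard : (Iset A).card = z := le_antisymm hle (z_le_of_tuple hn A k hk)
  obtain ⟨hm, hmem⟩ := (zprod_all_iff hn A k).mp hk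
  obtain ⟨hm', hmem'⟩ := (zprod_all_iff hn A k').mp hk'
  have e1 := Finset.orderEmbOfFin_unique hcard (fun m => hmem m) hm
  have e2 := Finset.orderEmbOfFin_unique hcard (fun m => hmem' m) hm'
  have : finFunctionFinEquiv.symm k = finFunctionFinEquiv.symm k' := by rw [e1, e2]
  exact finFunctionFinEquiv.symm.injective this

/-- The trivial full-communication protocol: in round `t`, player `t / l`
announces his bit `t % l`; after `n * l` rounds the blackboard holds the whole
input and the answer can be read off. -/
noncomputable def fullProtocol (n l : ℕ) (hn : 0 < n) (hl : 0 < l) : CommProtocol n l where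
  rounds := n * l
  speaker T := ⟨(T.length / l) % n, Nat.mod_lt _ hn⟩
  message _ a T := a ⟨T.length % l, Nat.mod_lt _ hl⟩
  output T := decide (∃ k : Fin l, ∀ i : Fin n, T.getD ((i : ℕ) * l + (k : ℕ)) false = true)

theorem fullProtocol_correct {n l : ℕ} (hn : 0 < n) (hl : 0 < l) (A : Fin n → Fin l → Bool) :
    (fullProtocol n l hn hl).run A = true ↔ intersects A := by
  set P := fullProtocol n l hn hl with hP
  have key : ∀ (i : Fin n) (k : Fin l),
      (P.transcript A (n * l)).getD ((i : ℕ) * l + (k : ℕ)) false = A i k := by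
    intro i k
    have hidx : (i : ℕ) * l + (k : ℕ) < n * l := by
      have hi : (i : ℕ) + 1 ≤ n := i.2
      have hk : (k : ℕ) < l := k.2
      calc (i : ℕ) * l + (k : ℕ) < (i : ℕ) * l + l := by omega
        _ = ((i : ℕ) + 1) * l := by ring
        _ ≤ n * l := Nat.mul_le_mul_right l hi
    have hlen : (i : ℕ) * l + (k : ℕ) < (P.transcript A (n * l)).length := by
      rw [P.transcript_length A]; exact hidx
    rw [List.getD_eq_getElem _ _ hlen, P.transcript_getElem A hidx hlen]
    set t := (i : ℕ) * l + (k : ℕ) with ht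
    have hlt : (P.transcript A t).length = t := P.transcript_length A t
    have hdiv : t / l = (i : ℕ) := by
      rw [ht, add_comm, mul_comm, Nat.add_mul_div_left _ _ hl, Nat.div_eq_of_lt k.2, zero_add]
    have hmod : t % l = (k : ℕ) := by
      rw [ht, add_comm, mul_comm, Nat.add_mul_mod_self_left, Nat.mod_eq_of_lt k.2]
    have hspk : P.speaker (P.transcript A t) = i := by
      show (⟨((P.transcript A t).length / l) % n, _⟩ : Fin n) = i
      apply Fin.ext
      simp only [hlt, hdiv, Nat.mod_eq_of_lt i.2]
    rw [hspk]
    show A i ⟨(P.transcript A t).length % l, _⟩ = A i k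
    congr 1
    apply Fin.ext
    simp only [hlt, hmod]
  show P.output (P.transcript A (n * l)) = true ↔ _
  have : P.output (P.transcript A (n * l)) =
      decide (∃ k : Fin l, ∀ i : Fin n,
        (P.transcript A (n * l)).getD ((i : ℕ) * l + (k : ℕ)) false = true) := rfl
  rw [this, decide_eq_true_eq]
  constructor
  · rintro ⟨k, hk⟩; exact ⟨k, fun i => by rw [← key i k]; exact hk i⟩
  · rintro ⟨k, hk⟩; exact ⟨k, fun i => by rw [key i k]; exact hk i⟩

theorem exists_protocol {n l : ℕ} (hn : 0 < n) (S : Fin n → Set (Fin l → Bool)) :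
    ∃ P : CommProtocol n l, P.rounds ≤ n * l ∧ CorrectOn P S := by
  rcases Nat.eq_zero_or_pos l with rfl | hl
  · refine ⟨⟨0, fun _ => ⟨0, hn⟩, fun _ _ _ => false, fun _ => false⟩, le_refl _, ?_⟩
    intro A _
    simp [CommProtocol.run, CommProtocol.transcript, intersects]
  · exact ⟨fullProtocol n l hn hl, le_refl _, fun A _ => fullProtocol_correct hn hl A⟩

theorem disjCC_spec {n l z : ℕ} (hn : 0 < n) :
    ∀ S : Fin n → Set (Fin l → Bool), Promise n l z S →
      ∃ P : CommProtocol n l, P.rounds ≤ disjCC n l z ∧ CorrectOn P S := by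
  have hmem : (n * l) ∈ {c : ℕ | ∀ S : Fin n → Set (Fin l → Bool), Promise n l z S →
      ∃ P : CommProtocol n l, P.rounds ≤ c ∧ CorrectOn P S} :=
    fun S _ => exists_protocol hn S
  exact Nat.sInf_mem ⟨_, hmem⟩

theorem disjCC_le {n l z c : ℕ}
    (h : ∀ S : Fin n → Set (Fin l → Bool), Promise n l z S →
      ∃ P : CommProtocol n l, P.rounds ≤ c ∧ CorrectOn P S) : disjCC n l z ≤ c :=
  Nat.sInf_le h

theorem disjCC_zero_players (l z : ℕ) : disjCC 0 l z = 0 := by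
  rw [disjCC, Nat.sInf_eq_zero]
  by_cases h : l ≤ z
  · right
    rw [Set.eq_empty_iff_forall_notMem]
    intro c hc
    obtain ⟨P, -, -⟩ := hc (fun _ => Set.univ) (fun A _ => by
      have he : (Finset.univ.filter (fun k : Fin l => ∀ i : Fin 0, A i k = true))
          = Finset.univ := by ext k; simp
      rw [he]; simpa using h)
    exact (P.speaker []).elim0
  · left
    intro S hS
    exfalso
    have := hS (fun i _ => true) (fun i => i.elim0)
    simp at this
    omega

namespace CommProtocol

/-- Pull back a protocol along a local preprocessing map `g` applied by each
player to his own input. -/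
def comap {n l l' : ℕ} (P : CommProtocol n l') (g : (Fin l → Bool) → Fin l' → Bool) :
    CommProtocol n l where
  rounds := P.rounds
  speaker := P.speaker
  message i a T := P.message i (g a) T
  output := P.output

theorem comap_transcript {n l l' : ℕ} (P : CommProtocol n l')
    (g : (Fin l → Bool) → Fin l' → Bool) (A : Fin n → Fin l → Bool) (t : ℕ) :
    (P.comap g).transcript A t = P.transcript (fun i => g (A i)) t := by
  induction t with
  | zero => rfl
  | succ t ih => rw [transcript_succ, transcript_succ, ih]; rfl

theorem comap_run {n l l' : ℕ} (P : CommProtocol n l')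
    (g : (Fin l → Bool) → Fin l' → Bool) (A : Fin n → Fin l → Bool) :
    (P.comap g).run A = P.run (fun i => g (A i)) := by
  rw [run, run, comap_transcript]; rfl

end CommProtocol

/-- Padding an `l`-bit string with zeros to get an `l'`-bit string. -/
def padB {l l' : ℕ} (h : l ≤ l') (a : Fin l → Bool) (k : Fin l') : Bool :=
  if hk : (k : ℕ) < l then a ⟨k, hk⟩ else false

theorem Iset_padB {n l l' : ℕ} (hn : 0 < n) (h : l ≤ l') (A : Fin n → Fin l → Bool) :
    Iset (fun i => padB h (A i)) = (Iset A).image (Fin.castLE h) := by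
  ext k
  simp only [Iset, Finset.mem_filter, Finset.mem_univ, true_and, Finset.mem_image]
  constructor
  · intro hk
    have hkl : (k : ℕ) < l := by
      by_contra hc
      have := hk ⟨0, hn⟩
      rw [padB, dif_neg hc] at this
      exact Bool.false_ne_true this
    refine ⟨⟨k, hkl⟩, ⟨fun i => ?_, rfl⟩⟩
    have := hk i
    rwa [padB, dif_pos hkl] at this
  · rintro ⟨k0, hk0, rfl⟩ i
    have hkl : ((Fin.castLE h k0 : Fin l') : ℕ) < l := k0.2
    rw [padB, dif_pos hkl]
    exact hk0 i

theorem intersects_padB {n l l' : ℕ} (hn : 0 < n) (h : l ≤ l') (A : Fin n → Fin l → Bool) :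
    intersects (fun i => padB h (A i)) ↔ intersects A := by
  rw [intersects_iff_Iset, intersects_iff_Iset, Iset_padB hn h]
  simp [Finset.image_nonempty]

theorem card_Iset_padB {n l l' : ℕ} (hn : 0 < n) (h : l ≤ l') (A : Fin n → Fin l → Bool) :
    (Iset (fun i => padB h (A i))).card = (Iset A).card := by
  rw [Iset_padB hn h, Finset.card_image_of_injective _ (Fin.castLE_injective h)]

theorem disjCC_mono_l {n z : ℕ} (hn : 0 < n) {l l' : ℕ} (h : l ≤ l') :
    disjCC n l z ≤ disjCC n l' z := by
  apply disjCC_le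
  intro S hS
  set S' : Fin n → Set (Fin l' → Bool) := fun i => padB h '' S i with hS'def
  have hProm : Promise n l' z S' := by
    intro B hB
    choose A hA hpad using hB
    have hBA : B = fun i => padB h (A i) := by
      funext i; exact (hpad i).symm
    subst hBA
    have : (Finset.univ.filter (fun k : Fin l' => ∀ i, padB h (A i) k = true))
        = Iset (fun i => padB h (A i)) := rfl
    rw [this, card_Iset_padB hn h]
    exact hS A hA
  obtain ⟨P', hr', hc'⟩ := disjCC_spec hn S' hProm
  refine ⟨P'.comap (padB h), hr', fun A hA => ?_⟩
  rw [CommProtocol.comap_run]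
  rw [hc' (fun i => padB h (A i)) (fun i => ⟨A i, hA i, rfl⟩)]
  exact intersects_padB hn h A

theorem key_step {n l z : ℕ} (hn : 0 < n) (hz : 1 ≤ z) :
    disjCC n l z ≤ disjCC n (l ^ z) 1 + disjCC n l (z - 1) := by
  classical
  apply disjCC_le
  intro S hS
  -- Phase 1: a 1-disjointness protocol on the z-products.
  set S' : Fin n → Set (Fin (l ^ z) → Bool) := fun i => zprod z '' S i with hS'def
  have hProm1 : Promise n (l ^ z) 1 S' := by
    intro B hB
    choose A hA hg using hB
    have hBA : B = fun i => zprod z (A i) := by funext i; exact (hg i).symm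
    subst hBA
    exact zcard_le_one hn A (hS A hA)
  obtain ⟨P1, hr1, hc1⟩ := disjCC_spec hn S' hProm1
  set r1 := P1.rounds with hr1def
  set c2 := disjCC n l (z - 1) with hc2def
  -- Phase 2: the restriction sets after a phase-1 transcript `T`.
  set S2 : List Bool → Fin n → Set (Fin l → Bool) :=
    fun T i => {a | a ∈ S i ∧ P1.Consistent i (zprod z a) T} with hS2def
  have defaultP : CommProtocol n l := ⟨0, fun _ => ⟨0, hn⟩, fun _ _ _ => false, fun _ => false⟩
  set P2 : List Bool → CommProtocol n l := fun T =>
    if h : Promise n l (z - 1) (S2 T) then (disjCC_spec hn (S2 T) h).choose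
    else ⟨0, fun _ => ⟨0, hn⟩, fun _ _ _ => false, fun _ => false⟩ with hP2def
  have hP2r : ∀ T, (P2 T).rounds ≤ c2 := by
    intro T
    simp only [hP2def]
    split
    · next h => exact (disjCC_spec hn (S2 T) h).choose_spec.1
    · exact Nat.zero_le _
  have hP2c : ∀ T, Promise n l (z - 1) (S2 T) → CorrectOn (P2 T) (S2 T) := by
    intro T h
    simp only [hP2def]
    rw [dif_pos h]
    exact (disjCC_spec hn (S2 T) h).choose_spec.2
  -- The combined protocol.
  set Q : CommProtocol n l :=
    { rounds := r1 + c2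
      speaker := fun T =>
        if T.length < r1 then P1.speaker T else (P2 (T.take r1)).speaker (T.drop r1)
      message := fun i a T =>
        if T.length < r1 then P1.message i (zprod z a) T
        else (P2 (T.take r1)).message i a (T.drop r1)
      output := fun T =>
        if P1.output (T.take r1) = true then true
        else (P2 (T.take r1)).output ((T.drop r1).take ((P2 (T.take r1)).rounds)) } with hQdef
  have L1 : ∀ (A : Fin n → Fin l → Bool) (t : ℕ), t ≤ r1 →
      Q.transcript A t = P1.transcript (fun i => zprod z (A i)) t := by
    intro A t
    induction t with
    | zero => intro _; rfl
    | succ t ih =>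
      intro ht
      have ht' : t ≤ r1 := by omega
      rw [CommProtocol.transcript_succ, CommProtocol.transcript_succ, ih ht']
      set T := P1.transcript (fun i => zprod z (A i)) t with hT
      have hlen : T.length = t := P1.transcript_length _ t
      have hlt : T.length < r1 := by omega
      have hsp : Q.speaker T = P1.speaker T := by
        show (if T.length < r1 then _ else _) = _
        rw [if_pos hlt]
      have hms : ∀ i a, Q.message i a T = P1.message i (zprod z a) T := by
        intro i a
        show (if T.length < r1 then _ else _) = _
        rw [if_pos hlt]
      rw [hsp, hms]
  have L2 : ∀ (A : Fin n → Fin l → Bool) (t : ℕ),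
      Q.transcript A (r1 + t) =
        P1.transcript (fun i => zprod z (A i)) r1 ++
          (P2 (P1.transcript (fun i => zprod z (A i)) r1)).transcript A t := by
    intro A t
    set T1 := P1.transcript (fun i => zprod z (A i)) r1 with hT1
    have hT1len : T1.length = r1 := P1.transcript_length _ r1
    induction t with
    | zero => rw [Nat.add_zero, L1 A r1 (le_refl _)]; simp [CommProtocol.transcript]; rfl
    | succ t ih =>
      rw [show r1 + (t + 1) = (r1 + t) + 1 by omega, CommProtocol.transcript_succ, ih]
      set U := (P2 T1).transcript A t with hU
      have hUlen : U.length = t := (P2 T1).transcript_length _ t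
      have hTUlen : (T1 ++ U).length = r1 + t := by simp [hT1len, hUlen]
      have hnlt : ¬ (T1 ++ U).length < r1 := by omega
      have htake : (T1 ++ U).take r1 = T1 := by rw [← hT1len]; exact List.take_left
      have hdrop : (T1 ++ U).drop r1 = U := by rw [← hT1len]; exact List.drop_left
      have hsp : Q.speaker (T1 ++ U) = (P2 T1).speaker U := by
        show (if (T1 ++ U).length < r1 then _ else _) = _
        rw [if_neg hnlt, htake, hdrop]
      have hms : ∀ i a, Q.message i a (T1 ++ U) = (P2 T1).message i a U := by
        intro i a
        show (if (T1 ++ U).length < r1 then _ else _) = _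
        rw [if_neg hnlt, htake, hdrop]
      rw [hsp, hms, CommProtocol.transcript_succ, List.append_assoc]
  have Lrun : ∀ A : Fin n → Fin l → Bool,
      Q.run A = if P1.output (P1.transcript (fun i => zprod z (A i)) r1) = true then true
        else (P2 (P1.transcript (fun i => zprod z (A i)) r1)).run A := by
    intro A
    set T1 := P1.transcript (fun i => zprod z (A i)) r1 with hT1
    have hT1len : T1.length = r1 := P1.transcript_length _ r1
    have hQr : Q.rounds = r1 + c2 := rfl
    rw [CommProtocol.run, hQr, L2 A c2]
    set U := (P2 T1).transcript A c2 with hU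
    have htake : (T1 ++ U).take r1 = T1 := by rw [← hT1len]; exact List.take_left
    have hdrop : (T1 ++ U).drop r1 = U := by rw [← hT1len]; exact List.drop_left
    show (if P1.output ((T1 ++ U).take r1) = true then true else _) = _
    rw [htake, hdrop, (P2 T1).transcript_take A (hP2r T1)]
    rfl
  refine ⟨Q, add_le_add hr1 (le_refl c2), ?_⟩
  -- Correctness of the combined protocol.
  intro A hA
  set B : Fin n → Fin (l ^ z) → Bool := fun i => zprod z (A i) with hB
  have hBmem : ∀ i, B i ∈ S' i := fun i => ⟨A i, hA i, rfl⟩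
  set T1 := P1.transcript B r1 with hT1
  have hT1len : T1.length = r1 := P1.transcript_length _ r1
  have hrun1 : P1.run B = true ↔ intersects B := hc1 B hBmem
  have hrun1' : P1.run B = P1.output T1 := rfl
  have hcards : (Iset A).card ≤ z := hS A hA
  by_cases hout : P1.output T1 = true
  · have hQ : Q.run A = true := by rw [Lrun A, if_pos hout]
    rw [hQ]
    have hiB : intersects B := hrun1.mp (by rw [hrun1', hout])
    have hcz : (Iset A).card = z := (zisect_iff hn A hcards).mp hiB
    have hiA : intersects A := by
      rw [intersects_iff_Iset, ← Finset.card_pos, hcz]; omega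
    simp [hiA]
  · have hQ : Q.run A = (P2 T1).run A := by rw [Lrun A, if_neg hout]
    have hProm2 : Promise n l (z - 1) (S2 T1) := by
      intro A' hA'
      have htr : P1.transcript (fun i => zprod z (A' i)) r1 = T1 :=
        P1.transcript_eq_of_consistent _ hT1len (fun i => (hA' i).2)
      have hno : P1.run (fun i => zprod z (A' i)) = P1.output T1 := by
        rw [CommProtocol.run, ← hr1def, htr]
      have hni : ¬ intersects (fun i => zprod z (A' i)) := by
        intro hi
        have := (hc1 _ (fun i => ⟨A' i, (hA' i).1, rfl⟩)).mpr hi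
        rw [hno] at this
        exact hout this
      have hle' : (Iset A').card ≤ z := hS A' (fun i => (hA' i).1)
      have hne : (Iset A').card ≠ z := fun hc => hni ((zisect_iff hn A' hle').mpr hc)
      have : (Finset.univ.filter (fun k : Fin l => ∀ i, A' i k = true)) = Iset A' := rfl
      rw [this]
      omega
    have hA2 : ∀ i, A i ∈ S2 T1 i :=
      fun i => ⟨hA i, P1.consistent_transcript B r1 i⟩
    rw [hQ]
    exact (hP2c T1 hProm2) A hA2

theorem disjCC_pow_mono {n z : ℕ} (hn : 0 < n) (l w : ℕ) (hw : 1 ≤ w) :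
    disjCC n (l ^ w) z ≤ disjCC n (l ^ (w + 1)) z := by
  apply disjCC_mono_l hn
  rcases Nat.eq_zero_or_pos l with rfl | hl
  · rw [zero_pow (by omega : w ≠ 0)]; exact Nat.zero_le _
  · exact Nat.pow_le_pow_right hl (by omega)


/-- `f_z(l) ≤ f_1(l^z) + f_{z-1}(l)`, and consequently `f_z(l) ≤ z · f_1(l^z)`. -/
theorem stmt5 (n l z : ℕ) (hz : 2 ≤ z) :
    disjCC n l z ≤ disjCC n (l ^ z) 1 + disjCC n l (z - 1) ∧
    disjCC n l z ≤ z * disjCC n (l ^ z) 1 := by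
  rcases Nat.eq_zero_or_pos n with rfl | hn
  · simp [disjCC_zero_players]
  constructor
  · exact key_step hn (by omega)
  · have claim : ∀ w, 1 ≤ w → disjCC n l w ≤ w * disjCC n (l ^ w) 1 := by
      intro w
      induction w with
      | zero => omega
      | succ w ih =>
        intro _
        rcases Nat.eq_zero_or_pos w with rfl | hw
        · simp
        · calc disjCC n l (w + 1)
              ≤ disjCC n (l ^ (w + 1)) 1 + disjCC n l ((w + 1) - 1) :=
                key_step hn (by omega)
            _ = disjCC n (l ^ (w + 1)) 1 + disjCC n l w := by simp
            _ ≤ disjCC n (l ^ (w + 1)) 1 + w * disjCC n (l ^ w) 1 :=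
                Nat.add_le_add_left (ih hw) _
            _ ≤ disjCC n (l ^ (w + 1)) 1 + w * disjCC n (l ^ (w + 1)) 1 :=
                Nat.add_le_add_left (Nat.mul_le_mul_left w (disjCC_pow_mono hn l w hw)) _
            _ = (w + 1) * disjCC n (l ^ (w + 1)) 1 := by ring
    exact claim z (by omega)
end

section
/- Fix a finite set M of m items. Let v : 2^M → ℝ be defined for a fixed nonempty S ⊆ M and constant B > 0 by v({j}) = 3B for j ∈ S, v({j}) = 0 for j ∉ S, extended additively (v(T) = Σ_{j∈T} v({j})). Let ℳ : 2^M → ℝ∪{∞} be a monotone menu with ℳ(∅)=0 whose finite prices are all at most B, and let S* be a profit maximizer of T ↦ v(T) − ℳ(T). Then: (i) if S ⊆ S*, then ℳ(S*) = ℳ(S); (ii) if |S*| < |S|, or |S*| ≥ |S| and S ⊄ S*, then ℳ(S) = ∞. -/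
open Finset

/-- Proposition "price-of-bundle": for the additive valuation giving each item of `S`
value `3B` (and `0` to the other items), any profit maximizer `S*` of a monotone
normalized menu with finite prices at most `B` satisfies: (i) if `S ⊆ S*` then
`ℳ S* = ℳ S`; (ii) if `|S*| < |S|`, or `|S*| ≥ |S|` and `S ⊄ S*`, then `ℳ S = ∞`. -/
theorem stmt10 {M : Type*} [Fintype M] [DecidableEq M]
    (B : ℝ) (hB : 0 < B)
    (S : Finset M) (hSne : S.Nonempty)
    (v : Finset M → ℝ) (hv : ∀ T : Finset M, v T = ((T ∩ S).card : ℝ) * (3 * B))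
    (ℳ : Finset M → EReal) (hbot : ∀ T, ℳ T ≠ ⊥)
    (hmono : ∀ T T' : Finset M, T ⊆ T' → ℳ T ≤ ℳ T') (hnorm : ℳ ∅ = 0)
    (hbound : ∀ T, ℳ T ≠ ⊤ → ℳ T ≤ (B : EReal))
    (Sstar : Finset M)
    (hmax : ∀ T : Finset M, (v T : EReal) - ℳ T ≤ (v Sstar : EReal) - ℳ Sstar) :
    (S ⊆ Sstar → ℳ Sstar = ℳ S) ∧
    (Sstar.card < S.card → ℳ S = ⊤) ∧
    (S.card ≤ Sstar.card → ¬ S ⊆ Sstar → ℳ S = ⊤) := by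
  have hnn : ∀ T, (0:EReal) ≤ ℳ T := fun T => hnorm ▸ hmono ∅ T (empty_subset T)
  -- ℳ Sstar is finite
  have hStop : ℳ Sstar ≠ ⊤ := by
    intro h
    have h0 := hmax ∅
    rw [hv ∅, hnorm, h] at h0
    simp only [EReal.sub_top] at h0
    simp at h0
  set p : ℝ := (ℳ Sstar).toReal with hpdef
  have hp : ℳ Sstar = (p : EReal) := (EReal.coe_toReal hStop (hbot Sstar)).symm
  have hp0 : (0:ℝ) ≤ p := by
    have := hnn Sstar
    rw [hp] at this
    exact_mod_cast this
  -- key: if |Sstar ∩ S| < |S| then ℳ S = ⊤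
  have key : (Sstar ∩ S).card < S.card → ℳ S = ⊤ := by
    intro hcard
    by_contra hMS
    set q : ℝ := (ℳ S).toReal with hqdef
    have hq : ℳ S = (q : EReal) := (EReal.coe_toReal hMS (hbot S)).symm
    have hqB : q ≤ B := by
      have := hbound S hMS
      rw [hq] at this
      exact_mod_cast this
    have h1 := hmax S
    rw [hq, hp, ← EReal.coe_sub, ← EReal.coe_sub, EReal.coe_le_coe_iff] at h1
    rw [hv S, hv Sstar, inter_self] at h1
    have hle : ((Sstar ∩ S).card : ℝ) ≤ (S.card : ℝ) - 1 := by
      have : (Sstar ∩ S).card + 1 ≤ S.card := hcard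
      have := (Nat.cast_le (α := ℝ)).mpr this
      push_cast at this
      linarith
    nlinarith
  refine ⟨?_, ?_, ?_⟩
  · intro hsub
    have hvv : v S = v Sstar := by
      rw [hv S, hv Sstar, inter_self, inter_eq_right.mpr hsub]
    have hmono' := hmono S Sstar hsub
    by_cases hMS : ℳ S = ⊤
    · exact le_antisymm (hMS ▸ le_top) hmono'
    set q : ℝ := (ℳ S).toReal with hqdef
    have hq : ℳ S = (q : EReal) := (EReal.coe_toReal hMS (hbot S)).symm
    have h1 := hmax S
    rw [hq, hp, ← EReal.coe_sub, ← EReal.coe_sub, EReal.coe_le_coe_iff, hvv] at h1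
    have : p ≤ q := by linarith
    rw [hp, hq]
    exact le_antisymm (by exact_mod_cast this) (by rw [← hp, ← hq]; exact hmono')
  · intro h
    exact key (lt_of_le_of_lt (card_le_card inter_subset_left) h)
  · intro _ hnsub
    apply key
    have : Sstar ∩ S ⊂ S := by
      refine ssubset_iff_of_subset inter_subset_right |>.mpr ?_
      obtain ⟨x, hxS, hxn⟩ := not_subset.mp hnsub
      exact ⟨x, hxS, fun hx => hxn (mem_inter.mp hx).1⟩
    exact card_lt_card this
end

section
/- Consider the two-player menu optimization problem where Alice holds a menu ℳ from a known finite family U of menus on bundles of a finite set M, Bob holds a monotone valuation v, and a one-way protocol (Alice speaks first, then Bob) must output a bundle maximizing v(S) − ℳ(S). Suppose some protocol uses strictly fewer than log₂|U| bits for Alice's message. Then there exist two distinct menus ℳ, ℳ' ∈ U on which Alice sends the same message, and there exists a single-minded monotone valuation v (taking value (ℳ(S₀)+ℳ'(S₀))/2 on supersets of some bundle S₀ where the menus differ, 0 elsewhere) such that the protocol's output is incorrect on at least one of the two menus: every profit maximizer under ℳ contains S₀ iff every profit maximizer under ℳ' does not. -/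
private lemma stmt11_key {M : Type*} [Fintype M] [DecidableEq M]
    {Msg : Type*}
    (a : (Finset M → ℝ) → Msg)
    (out : Msg → (Finset M → ℝ) → Finset M)
    (ℳ ℳ' : Finset M → ℝ)
    (h1 : ∀ A B : Finset M, A ⊆ B → ℳ A ≤ ℳ B) (h10 : ℳ ∅ = 0)
    (h2 : ∀ A B : Finset M, A ⊆ B → ℳ' A ≤ ℳ' B) (h20 : ℳ' ∅ = 0)
    (ha : a ℳ = a ℳ')
    (S₀ : Finset M) (hlt : ℳ' S₀ < ℳ S₀) :
      ∃ (v : Finset M → ℝ),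
        (∀ T : Finset M, v T = if S₀ ⊆ T then (ℳ S₀ + ℳ' S₀) / 2 else 0) ∧
        (∀ A B : Finset M, A ⊆ B → v A ≤ v B) ∧
        (∀ T : Finset M, (∀ R, v R - ℳ R ≤ v T - ℳ T) → ¬ S₀ ⊆ T) ∧
        (∀ T : Finset M, (∀ R, v R - ℳ' R ≤ v T - ℳ' T) → S₀ ⊆ T) ∧
        (¬ (∀ R, v R - ℳ R ≤ v (out (a ℳ) v) - ℳ (out (a ℳ) v)) ∨
          ¬ (∀ R, v R - ℳ' R ≤ v (out (a ℳ') v) - ℳ' (out (a ℳ') v))) := by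
  set x : ℝ := (ℳ S₀ + ℳ' S₀) / 2 with hxdef
  have hx1 : ℳ' S₀ < x := by simp only [hxdef]; linarith
  have hx2 : x < ℳ S₀ := by simp only [hxdef]; linarith
  have hS0 : S₀ ≠ ∅ := by
    intro h; rw [h, h10, h20] at hlt; exact lt_irrefl 0 hlt
  have hxpos : 0 < x := lt_of_le_of_lt (h20 ▸ h2 ∅ S₀ (Finset.empty_subset _)) hx1
  set v : Finset M → ℝ := fun T => if S₀ ⊆ T then x else 0 with hv
  have hvT : ∀ T, v T = if S₀ ⊆ T then x else 0 := fun T => rfl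
  have hv0 : v ∅ = 0 := by
    rw [hvT, if_neg]; intro h; exact hS0 (Finset.subset_empty.mp h)
  have hmono : ∀ A B : Finset M, A ⊆ B → v A ≤ v B := by
    intro A B hAB
    rw [hvT, hvT]
    by_cases h : S₀ ⊆ A
    · rw [if_pos h, if_pos (h.trans hAB)]
    · rw [if_neg h]
      by_cases h' : S₀ ⊆ B
      · rw [if_pos h']; exact hxpos.le
      · rw [if_neg h']
  have hM : ∀ T : Finset M, (∀ R, v R - ℳ R ≤ v T - ℳ T) → ¬ S₀ ⊆ T := by
    intro T hmax hsub
    have h0 := hmax ∅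
    rw [hv0, h10] at h0
    rw [hvT, if_pos hsub] at h0
    have := h1 S₀ T hsub
    linarith
  have hM' : ∀ T : Finset M, (∀ R, v R - ℳ' R ≤ v T - ℳ' T) → S₀ ⊆ T := by
    intro T hmax
    by_contra hsub
    have h0 := hmax S₀
    rw [hvT T, if_neg hsub, hvT S₀, if_pos (Finset.Subset.refl _)] at h0
    have h0' : 0 ≤ ℳ' T := h20 ▸ h2 ∅ T (Finset.empty_subset _)
    linarith
  refine ⟨v, hvT, hmono, hM, hM', ?_⟩
  by_contra h
  push_neg at h
  obtain ⟨hm, hm'⟩ := h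
  have c1 := hM _ hm
  have c2 := hM' _ hm'
  rw [ha] at c1
  exact c1 c2

/-- One-way menu optimization needs `log₂|U|` bits: if Alice's message space is smaller
than the family `U` of (monotone, normalized) menus, then two distinct menus get the
same message, and a single-minded valuation witnesses incorrectness of the protocol on
at least one of them, because every profit maximizer under one menu must contain the
differing bundle `S₀` while every profit maximizer under the other must not. -/
theorem stmt11 {M : Type*} [Fintype M] [DecidableEq M]
    {Msg : Type*} [Fintype Msg]
    (U : Finset (Finset M → ℝ))
    (hU : ∀ ℳ ∈ U, (∀ A B : Finset M, A ⊆ B → ℳ A ≤ ℳ B) ∧ ℳ ∅ = 0)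
    (hsmall : Fintype.card Msg < U.card)
    (a : (Finset M → ℝ) → Msg)
    (out : Msg → (Finset M → ℝ) → Finset M) :
    ∃ ℳ ∈ U, ∃ ℳ' ∈ U, ℳ ≠ ℳ' ∧ a ℳ = a ℳ' ∧
      ∃ (S₀ : Finset M) (v : Finset M → ℝ),
        ℳ' S₀ < ℳ S₀ ∧
        (∀ T : Finset M, v T = if S₀ ⊆ T then (ℳ S₀ + ℳ' S₀) / 2 else 0) ∧
        (∀ A B : Finset M, A ⊆ B → v A ≤ v B) ∧
        (∀ T : Finset M, (∀ R, v R - ℳ R ≤ v T - ℳ T) → ¬ S₀ ⊆ T) ∧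
        (∀ T : Finset M, (∀ R, v R - ℳ' R ≤ v T - ℳ' T) → S₀ ⊆ T) ∧
        (¬ (∀ R, v R - ℳ R ≤ v (out (a ℳ) v) - ℳ (out (a ℳ) v)) ∨
          ¬ (∀ R, v R - ℳ' R ≤ v (out (a ℳ') v) - ℳ' (out (a ℳ') v))) := by
  obtain ⟨f, hf, g, hg, hne, heq⟩ :=
    Finset.exists_ne_map_eq_of_card_lt_of_maps_to
      (by simpa using hsmall) (fun m _ => Finset.mem_univ (a m))
  obtain ⟨S₀, hS₀⟩ : ∃ S, f S ≠ g S := by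
    by_contra h; push_neg at h; exact hne (funext h)
  obtain ⟨hf1, hf0⟩ := hU f hf
  obtain ⟨hg1, hg0⟩ := hU g hg
  rcases lt_or_gt_of_ne hS₀ with h | h
  · obtain ⟨v, hv⟩ := stmt11_key a out g f hg1 hg0 hf1 hf0 heq.symm S₀ h
    exact ⟨g, hg, f, hf, (Ne.symm hne), heq.symm, S₀, v, h, hv⟩
  · obtain ⟨v, hv⟩ := stmt11_key a out f g hf1 hf0 hg1 hg0 heq S₀ h
    exact ⟨f, hf, g, hg, hne, heq, S₀, v, h, hv⟩
end

section
/- Consider the 1-disjointness problem: n players hold strings A^i ∈ S^i ⊆ {0,1}^l with the promise that every joint input in S^1 × … × S^n has at most one intersecting bit (a bit k with A^i_k = 1 for all i). Suppose there is an intersecting bit k, and for each player i define the neighborhood N_i(k) = {j : ∃A ∈ S^i, A_j = 1 and A_k = 1}. If |N_i(k)| > (1 − 1/(2n))·r for all i (with r the number of candidate bits), then |∩_i N_i(k)| > r/2 ≥ 2, and picking k' ≠ k in the intersection yields, via strings C^i ∈ S^i with C^i_k = C^i_{k'} = 1, a joint input with at least two intersecting bits — contradicting the promise. Hence at least one player's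 neighborhood of the intersecting bit has size at most (1 − 1/(2n))·r. -/
/-- Key claim in the protocol for 1-disjointness: under the promise that every joint
input has at most one intersecting bit, if bit `k` intersects at input `A`, then at
least one player's neighborhood `N_i(k) = {j : ∃ C ∈ S_i, C_j = 1 ∧ C_k = 1}` has size
at most `(1 - 1/(2n))·l`. -/
theorem stmt16 (n l : ℕ) (hn : 1 ≤ n) (hl : 2 ≤ l)
    (S : Fin n → Finset (Fin l → Bool))
    (hpromise : ∀ A : Fin n → Fin l → Bool, (∀ i, A i ∈ S i) →
      (Finset.univ.filter (fun k : Fin l => ∀ i, A i k = true)).card ≤ 1)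
    (A : Fin n → Fin l → Bool) (hA : ∀ i, A i ∈ S i)
    (k : Fin l) (hk : ∀ i, A i k = true) :
    ∃ i : Fin n,
      (((Finset.univ.filter
          (fun j : Fin l => ∃ C ∈ S i, C j = true ∧ C k = true)).card : ℝ)
        ≤ (1 - 1 / (2 * (n : ℝ))) * (l : ℝ)) := by
  by_contra h
  push_neg at h
  set N : Fin n → Finset (Fin l) := fun i =>
    Finset.univ.filter (fun j : Fin l => ∃ C ∈ S i, C j = true ∧ C k = true) with hN
  -- intersection set
  set T : Finset (Fin l) :=
    Finset.univ.filter (fun j : Fin l => ∀ i, ∃ C ∈ S i, C j = true ∧ C k = true) with hT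
  have hnpos : (0 : ℝ) < n := by exact_mod_cast hn
  -- complement bound
  have hsub : Tᶜ ⊆ Finset.univ.biUnion (fun i => (N i)ᶜ) := by
    intro j hj
    simp only [hT, Finset.mem_compl, Finset.mem_filter, Finset.mem_univ, true_and,
      not_forall] at hj
    obtain ⟨i, hi⟩ := hj
    simp only [Finset.mem_biUnion, Finset.mem_univ, true_and, Finset.mem_compl, hN,
      Finset.mem_filter]
    exact ⟨i, by simp [hi]⟩
  have hcardc : (Tᶜ.card : ℝ) ≤ ∑ i : Fin n, ((N i)ᶜ.card : ℝ) := by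
    have := le_trans (Finset.card_le_card hsub) (Finset.card_biUnion_le)
    exact_mod_cast this
  have hNc : ∀ i, ((N i)ᶜ.card : ℝ) < l / (2 * n) := by
    intro i
    have h1 : ((N i).card : ℝ) > (1 - 1 / (2 * (n : ℝ))) * l := h i
    have h2 : (N i)ᶜ.card = l - (N i).card := by
      rw [Finset.card_compl]; simp
    have h3 : (N i).card ≤ l := by
      have := Finset.card_le_univ (N i); simpa using this
    have : ((N i)ᶜ.card : ℝ) = l - (N i).card := by
      rw [h2]; push_cast [h3]; ring
    rw [this]
    have he : (1 - 1 / (2 * (n:ℝ))) * l = l - l / (2 * n) := by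
      field_simp
    linarith [h1, he]
  have hsum : (Tᶜ.card : ℝ) < l / 2 := by
    calc (Tᶜ.card : ℝ) ≤ ∑ i : Fin n, ((N i)ᶜ.card : ℝ) := hcardc
      _ < ∑ _i : Fin n, ((l:ℝ) / (2 * n)) := by
          apply Finset.sum_lt_sum_of_nonempty
          · exact Finset.univ_nonempty_iff.2 ⟨⟨0, hn⟩⟩
          · intro i _; exact hNc i
      _ = n * ((l:ℝ) / (2 * n)) := by simp [Finset.sum_const, mul_comm]
      _ = l / 2 := by field_simp
  have hTcard : 2 ≤ T.card := by
    have h4 : T.card + Tᶜ.card = l := by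
      have := Finset.card_add_card_compl T; simpa using this
    have h4' : (T.card : ℝ) + Tᶜ.card = l := by exact_mod_cast h4
    have hlr : (2:ℝ) ≤ l := by exact_mod_cast hl
    have h5 : (1:ℝ) < T.card := by linarith
    have h6 : 1 < T.card := by exact_mod_cast h5
    omega
  have hkT : k ∈ T := by
    simp only [hT, Finset.mem_filter, Finset.mem_univ, true_and]
    exact fun i => ⟨A i, hA i, hk i, hk i⟩
  obtain ⟨k', hk'T, hk'ne⟩ := Finset.exists_mem_ne (s := T) (by omega) k
  simp only [hT, Finset.mem_filter, Finset.mem_univ, true_and] at hk'T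
  choose C hC1 hC2 hC3 using hk'T
  have hcontra := hpromise C (fun i => hC1 i)
  have : {k, k'} ⊆ Finset.univ.filter (fun j : Fin l => ∀ i, C i j = true) := by
    intro x hx
    simp only [Finset.mem_insert, Finset.mem_singleton] at hx
    simp only [Finset.mem_filter, Finset.mem_univ, true_and]
    rcases hx with rfl | rfl
    · exact hC3
    · exact hC2
  have h2le : 2 ≤ (Finset.univ.filter (fun j : Fin l => ∀ i, C i j = true)).card := by
    calc 2 = ({k, k'} : Finset (Fin l)).card := by
            rw [Finset.card_insert_of_notMem (by simpa using (Ne.symm hk'ne)),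
                Finset.card_singleton]
      _ ≤ _ := Finset.card_le_card this
  omega
end
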